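/- For the Wright function W_{B,β}(z) = Σ_{k≥0} z^k/(k! Γ(β + kB)) with B ≥ 0, β > 0, the normalized function 𝒲_{B,β}(z) = Γ(β)·W_{B,β}(z) satisfies the Turán-type inequality 𝒲_{B,β}(z)·𝒲_{B,β+2}(z) ≥ 𝒲_{B,β+1}(z)² for all z > 0. -/

import Mathlib

open Real

/-- Γ(x) ≥ 1 for x ≥ 2, via log-convexity. -/
lemma gamma_one_le {x : ℝ} (hx : 2 ≤ x) : 1 ≤ Real.Gamma x := by
  rcases eq_or_lt_of_le hx with h | h
  · rw [← h]; rw [Real.Gamma_two]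
  · have h1 : (1 : ℝ) ∈ Set.Ioi (0 : ℝ) := by norm_num
    have h2 : x ∈ Set.Ioi (0 : ℝ) := by simp; linarith
    set t : ℝ := (x - 2) / (x - 1) with ht
    have hx1 : (0:ℝ) < x - 1 := by linarith
    have ht0 : 0 ≤ t := div_nonneg (by linarith) (by linarith)
    have ht1 : 0 ≤ 1 - t := by
      rw [ht]; rw [sub_nonneg, div_le_one hx1]; linarith
    have hsum : t + (1 - t) = 1 := by ring
    have hcomb : t * 1 + (1 - t) * x = 2 := by
      have htx : t * (x - 1) = x - 2 := by rw [ht]; exact div_mul_cancel₀ _ (ne_of_gt hx1)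
      linear_combination -htx
    have := Real.convexOn_log_Gamma.2 h1 h2 ht0 ht1 hsum
    simp only [smul_eq_mul] at this
    rw [hcomb] at this
    simp only [Function.comp_apply, Real.Gamma_one, Real.Gamma_two, Real.log_one] at this
    -- this : 0 ≤ t * 0 + (1-t) * log (Gamma x)
    have hlog : 0 ≤ Real.log (Real.Gamma x) := by
      by_contra hneg
      push_neg at hneg
      have h1t : 0 < 1 - t := by
        rw [ht, sub_pos, div_lt_one hx1]; linarith
      nlinarith
    have hgpos : 0 < Real.Gamma x := Real.Gamma_pos_of_pos (by linarith)
    calc (1:ℝ) = Real.exp 0 := (Real.exp_zero).symm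
      _ ≤ Real.exp (Real.log (Real.Gamma x)) := Real.exp_le_exp.2 hlog
      _ = Real.Gamma x := Real.exp_log hgpos

/-- Γ(x) ≥ 1/6 for all x > 0. -/
lemma gamma_ge_sixth {x : ℝ} (hx : 0 < x) : (1:ℝ)/6 ≤ Real.Gamma x := by
  rcases le_or_gt 2 x with h | h
  · linarith [gamma_one_le h]
  · have h2 : 1 ≤ Real.Gamma (x + 2) := gamma_one_le (by linarith)
    have he : Real.Gamma (x + 2) = (x + 1) * x * Real.Gamma x := by
      have e1 : x + 2 = (x + 1) + 1 := by ring
      rw [e1, Real.Gamma_add_one (by positivity), Real.Gamma_add_one (ne_of_gt hx)]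
      ring
    have hgpos : 0 < Real.Gamma x := Real.Gamma_pos_of_pos hx
    nlinarith [mul_nonneg (mul_nonneg (by linarith : (0:ℝ) ≤ x + 1) hx.le)
      (by linarith : (0:ℝ) ≤ Real.Gamma x),
      mul_nonneg (by linarith : (0:ℝ) ≤ x + 3) (by linarith : (0:ℝ) ≤ 2 - x),
      mul_pos (mul_pos (by linarith : (0:ℝ) < x + 1) hx) hgpos]

lemma summable_wright (B β z : ℝ) (hB : 0 ≤ B) (hβ : 0 < β) (hz : 0 < z) :
    Summable (fun k : ℕ => z ^ k / ((k.factorial : ℝ) * Real.Gamma (β + k * B))) := by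
  have hs : Summable (fun k : ℕ => 6 * (z ^ k / (k.factorial : ℝ))) :=
    (Real.summable_pow_div_factorial z).mul_left 6
  refine Summable.of_nonneg_of_le (fun k => ?_) (fun k => ?_) hs
  · have : 0 < β + k * B := by positivity
    have := Real.Gamma_pos_of_pos this
    positivity
  · have hpos : 0 < β + k * B := by positivity
    have hg : (1:ℝ)/6 ≤ Real.Gamma (β + k * B) := gamma_ge_sixth hpos
    have hgpos : 0 < Real.Gamma (β + k * B) := lt_of_lt_of_le (by norm_num) hg
    have hf : (0:ℝ) < (k.factorial : ℝ) := by positivity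
    rw [div_le_iff₀ (by positivity)]
    have hzk : 0 < z ^ k := by positivity
    calc z ^ k = 6 * (z ^ k / (k.factorial : ℝ)) * ((k.factorial : ℝ) * (1/6)) := by
          field_simp
      _ ≤ 6 * (z ^ k / (k.factorial : ℝ)) * ((k.factorial : ℝ) * Real.Gamma (β + k * B)) := by
          have h6 : 0 ≤ 6 * (z ^ k / (k.factorial : ℝ)) := by positivity
          apply mul_le_mul_of_nonneg_left _ h6
          exact mul_le_mul_of_nonneg_left hg (le_of_lt hf)

/-- Cauchy–Schwarz for tsums. -/
lemma tsum_sq_le_tsum_mul_tsum {a b c : ℕ → ℝ} (ha : Summable a) (hb : Summable b)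
    (hc : Summable c)
    (ha0 : ∀ k, 0 ≤ a k) (hb0 : ∀ k, 0 ≤ b k) (hc0 : ∀ k, 0 ≤ c k)
    (h : ∀ k, b k ^ 2 ≤ a k * c k) :
    (∑' k, b k) ^ 2 ≤ (∑' k, a k) * (∑' k, c k) := by
  have hA : 0 ≤ ∑' k, a k := tsum_nonneg ha0
  have hC : 0 ≤ ∑' k, c k := tsum_nonneg hc0
  have key : ∑' k, b k ≤ Real.sqrt ((∑' k, a k) * (∑' k, c k)) := by
    refine Summable.tsum_le_of_sum_le hb (fun s => ?_)
    calc ∑ k ∈ s, b k ≤ ∑ k ∈ s, Real.sqrt (a k) * Real.sqrt (c k) := by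
          refine Finset.sum_le_sum (fun k _ => ?_)
          rw [← Real.sqrt_mul (ha0 k)]
          calc b k = Real.sqrt (b k ^ 2) := (Real.sqrt_sq (hb0 k)).symm
            _ ≤ Real.sqrt (a k * c k) := Real.sqrt_le_sqrt (h k)
      _ ≤ Real.sqrt (∑ k ∈ s, a k) * Real.sqrt (∑ k ∈ s, c k) :=
          Real.sum_sqrt_mul_sqrt_le s (fun k => ha0 k) (fun k => hc0 k)
      _ ≤ Real.sqrt (∑' k, a k) * Real.sqrt (∑' k, c k) := by
          apply mul_le_mul
          · exact Real.sqrt_le_sqrt (Summable.sum_le_tsum s (fun k _ => ha0 k) ha)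
          · exact Real.sqrt_le_sqrt (Summable.sum_le_tsum s (fun k _ => hc0 k) hc)
          · positivity
          · positivity
      _ = Real.sqrt ((∑' k, a k) * (∑' k, c k)) := (Real.sqrt_mul hA _).symm
  calc (∑' k, b k) ^ 2 ≤ Real.sqrt ((∑' k, a k) * (∑' k, c k)) ^ 2 := by
        apply pow_le_pow_left₀ (tsum_nonneg hb0) key
    _ = (∑' k, a k) * (∑' k, c k) := Real.sq_sqrt (by positivity)

theorem wright_turan (B β z : ℝ) (hB : 0 ≤ B) (hβ : 0 < β) (hz : 0 < z) :
    (Real.Gamma (β + 1) * ∑' k : ℕ, z ^ k / ((k.factorial : ℝ) * Real.Gamma (β + 1 + k * B))) ^ 2 ≤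
      (Real.Gamma β * ∑' k : ℕ, z ^ k / ((k.factorial : ℝ) * Real.Gamma (β + k * B))) *
        (Real.Gamma (β + 2) * ∑' k : ℕ, z ^ k / ((k.factorial : ℝ) * Real.Gamma (β + 2 + k * B))) := by
  have hS0 := summable_wright B β z hB hβ hz
  have hS1 := summable_wright B (β + 1) z hB (by linarith) hz
  have hS2 := summable_wright B (β + 2) z hB (by linarith) hz
  -- fold gamma factors into the sums
  rw [← tsum_mul_left, ← tsum_mul_left, ← tsum_mul_left]
  set a : ℕ → ℝ := fun k => Real.Gamma β * (z ^ k / ((k.factorial : ℝ) * Real.Gamma (β + k * B)))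
  set b : ℕ → ℝ := fun k =>
    Real.Gamma (β + 1) * (z ^ k / ((k.factorial : ℝ) * Real.Gamma (β + 1 + k * B)))
  set c : ℕ → ℝ := fun k =>
    Real.Gamma (β + 2) * (z ^ k / ((k.factorial : ℝ) * Real.Gamma (β + 2 + k * B)))
  have hgβ : 0 < Real.Gamma β := Real.Gamma_pos_of_pos hβ
  have hg1 : 0 < Real.Gamma (β + 1) := Real.Gamma_pos_of_pos (by linarith)
  have hg2 : 0 < Real.Gamma (β + 2) := Real.Gamma_pos_of_pos (by linarith)
  have ha0 : ∀ k, 0 ≤ a k := fun k => by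
    have h1 : 0 < β + k * B := by positivity
    have := Real.Gamma_pos_of_pos h1
    have : 0 < (k.factorial : ℝ) := by positivity
    simp only [a]
    positivity
  have hb0 : ∀ k, 0 ≤ b k := fun k => by
    have h1 : 0 < β + 1 + k * B := by positivity
    have := Real.Gamma_pos_of_pos h1
    have : 0 < (k.factorial : ℝ) := by positivity
    simp only [b]
    positivity
  have hc0 : ∀ k, 0 ≤ c k := fun k => by
    have h1 : 0 < β + 2 + k * B := by positivity
    have := Real.Gamma_pos_of_pos h1
    have : 0 < (k.factorial : ℝ) := by positivity
    simp only [c]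
    positivity
  refine tsum_sq_le_tsum_mul_tsum (hS0.mul_left _) (hS1.mul_left _) (hS2.mul_left _) ha0 hb0 hc0 (fun k => ?_)
  -- pointwise log-convexity inequality
  set s : ℝ := (k : ℝ) * B with hsdef
  have hs : 0 ≤ s := by positivity
  have hβs : 0 < β + s := by linarith
  have hG : 0 < Real.Gamma (β + s) := Real.Gamma_pos_of_pos hβs
  have e1 : Real.Gamma (β + 1) = β * Real.Gamma β := by
    rw [Real.Gamma_add_one (ne_of_gt hβ)]
  have e2 : Real.Gamma (β + 2) = (β + 1) * (β * Real.Gamma β) := by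
    have : β + 2 = (β + 1) + 1 := by ring
    rw [this, Real.Gamma_add_one (by linarith), e1]
  have f1 : Real.Gamma (β + 1 + s) = (β + s) * Real.Gamma (β + s) := by
    have : β + 1 + s = (β + s) + 1 := by ring
    rw [this, Real.Gamma_add_one (ne_of_gt hβs)]
  have f2 : Real.Gamma (β + 2 + s) = (β + 1 + s) * ((β + s) * Real.Gamma (β + s)) := by
    have h' : β + 2 + s = (β + 1 + s) + 1 := by ring
    rw [h', Real.Gamma_add_one (by linarith), f1]
  have hfac : 0 < (k.factorial : ℝ) := by positivity
  have hzk : 0 < z ^ k := by positivity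
  have h1s : 0 < β + 1 + s := by linarith
  have key : β * (β + 1 + s) ≤ (β + 1) * (β + s) := by nlinarith
  set Q : ℝ := β * (Real.Gamma β) ^ 2 * (z ^ k) ^ 2 /
      (((k.factorial : ℝ)) ^ 2 * (β + s) ^ 2 * (β + 1 + s) * (Real.Gamma (β + s)) ^ 2) with hQ
  have hQ0 : 0 ≤ Q := by positivity
  simp only [a, b, c, ← hsdef, e1, e2, f1, f2]
  have L : (β * Real.Gamma β * (z ^ k / ((k.factorial : ℝ) * ((β + s) * Real.Gamma (β + s))))) ^ 2
      = (β * (β + 1 + s)) * Q := by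
    rw [hQ]; field_simp
  have R : Real.Gamma β * (z ^ k / ((k.factorial : ℝ) * Real.Gamma (β + s))) *
      ((β + 1) * (β * Real.Gamma β) *
        (z ^ k / ((k.factorial : ℝ) * ((β + 1 + s) * ((β + s) * Real.Gamma (β + s))))))
      = ((β + 1) * (β + s)) * Q := by
    rw [hQ]; field_simp
  rw [L, R]
  exact mul_le_mul_of_nonneg_right key hQ0
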